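/- Consider the merge sort CHR^rp program with rules: 1 :: ms1 @ arrow(X,A) \ arrow(X,B) ⇔ A < B | arrow(A,B); 2 :: ms2 @ merge(N,A), merge(N,B) ⇔ A < B | merge(2·N+1,A), arrow(A,B); 3 :: ms3 @ number(X) ⇔ merge(0,X), executed under the priority semantics ω_p from an initial goal of n distinct number/1 constraints. Then in every reachable state, for each value V there are at most two stored merge constraints with first argument V, and at most two stored arrow constraints with first argument V. -/
import Mathlib


namespace MergeSort

/-- The CHR constraints of the merge sort program: `number X`, `merge N A` and
`arrow A B`. -/
inductive MSC : Type
  | number (x : ℤ)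
  | merge (n : ℕ) (a : ℤ)
  | arrow (a b : ℤ)
deriving DecidableEq

/-- Some instance of rule `ms1` (priority 1) is applicable in the store `S`. -/
def ms1App (S : Multiset MSC) : Prop :=
  ∃ X A B : ℤ, A < B ∧ MSC.arrow X A ∈ S ∧ MSC.arrow X B ∈ S

/-- Some instance of rule `ms2` (priority 2) is applicable in the store `S`. -/
def ms2App (S : Multiset MSC) : Prop :=
  ∃ (N : ℕ) (A B : ℤ), A < B ∧ MSC.merge N A ∈ S ∧ MSC.merge N B ∈ S

/-- Transition labels recording which rule fired (for `ms2` also the value `N` of the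
matched `merge` constraints). -/
inductive Lab : Type
  | ms1
  | ms2 (N : ℕ)
  | ms3
deriving DecidableEq

/-- The transitions of the priority semantics ω_p of the merge sort program
`1 :: ms1 @ arrow(X,A) \ arrow(X,B) ⇔ A < B | arrow(A,B)`,
`2 :: ms2 @ merge(N,A), merge(N,B) ⇔ A < B | merge(2·N+1,A), arrow(A,B)`,
`3 :: ms3 @ number(X) ⇔ merge(0,X)`:
among all applicable rule instances, one of highest priority (numerically smallest)
fires, removing the constraints matching removed heads and adding the instantiated
body.  (The guards `A < B` make the matched head constraints distinct; since no rule is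
a propagation rule, no propagation history is needed and states are just multisets of
stored constraints.) -/
inductive Step : Multiset MSC → Lab → Multiset MSC → Prop
  | ms1 (S : Multiset MSC) (X A B : ℤ) :
      A < B → MSC.arrow X A ∈ S → MSC.arrow X B ∈ S →
      Step S Lab.ms1 (MSC.arrow A B ::ₘ S.erase (MSC.arrow X B))
  | ms2 (S : Multiset MSC) (N : ℕ) (A B : ℤ) :
      A < B → MSC.merge N A ∈ S → MSC.merge N B ∈ S →
      ¬ ms1App S →
      Step S (Lab.ms2 N)
        (MSC.merge (2 * N + 1) A ::ₘ MSC.arrow A B ::ₘ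
          ((S.erase (MSC.merge N A)).erase (MSC.merge N B)))
  | ms3 (S : Multiset MSC) (X : ℤ) :
      MSC.number X ∈ S → ¬ ms1App S → ¬ ms2App S →
      Step S Lab.ms3 (MSC.merge 0 X ::ₘ S.erase (MSC.number X))

/-- The initial store: one `number` constraint for each element of `l`. -/
def InitState (l : List ℤ) : Multiset MSC := ↑(l.map MSC.number)

/-- Reachability from the initial store of `l`. -/
def Reach (l : List ℤ) (S : Multiset MSC) : Prop :=
  Relation.ReflTransGen (fun s s' => ∃ lab, Step s lab s') (InitState l) S

/-- `merge` constraints with first argument `N`. -/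
def mergeFst (N : ℕ) : MSC → Bool
  | .merge m _ => m = N
  | _ => false

/-- `arrow` constraints with first argument `V`. -/
def arrowFst (V : ℤ) : MSC → Bool
  | .arrow a _ => a = V
  | _ => false



def sndIs (V : ℤ) : MSC → Bool
  | .number x => x = V
  | .merge _ a => a = V
  | .arrow _ b => b = V

lemma countP_replace (p : MSC → Prop) [DecidablePred p] (S : Multiset MSC) (a b : MSC)
    (hb : b ∈ S) :
    (a ::ₘ S.erase b).countP p + (if p b then 1 else 0)
      = S.countP p + (if p a then 1 else 0) := by
  conv_rhs => rw [← Multiset.cons_erase hb]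
  rw [Multiset.countP_cons, Multiset.countP_cons]
  omega

lemma countP_replace2 (p : MSC → Prop) [DecidablePred p] (S : Multiset MSC) (a1 a2 b1 b2 : MSC)
    (hb1 : b1 ∈ S) (hb2 : b2 ∈ S.erase b1) :
    (a1 ::ₘ a2 ::ₘ (S.erase b1).erase b2).countP p
        + (if p b1 then 1 else 0) + (if p b2 then 1 else 0)
      = S.countP p + (if p a1 then 1 else 0) + (if p a2 then 1 else 0) := by
  conv_rhs => rw [← Multiset.cons_erase hb1, ← Multiset.cons_erase hb2]
  rw [Multiset.countP_cons, Multiset.countP_cons, Multiset.countP_cons, Multiset.countP_cons]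
  omega

lemma two_le_countP (p : MSC → Prop) [DecidablePred p] {S : Multiset MSC} {a b : MSC}
    (ha : a ∈ S) (hb : b ∈ S.erase a) (hpa : p a) (hpb : p b) :
    2 ≤ S.countP p := by
  rw [← Multiset.cons_erase ha, Multiset.countP_cons]
  have h1 : 0 < (S.erase a).countP p := Multiset.countP_pos.2 ⟨b, hb, hpb⟩
  simp [hpa]; omega

lemma two_le_countP' (p : MSC → Prop) [DecidablePred p] {S : Multiset MSC} {a b : MSC}
    (ha : a ∈ S) (hb : b ∈ S) (hne : a ≠ b) (hpa : p a) (hpb : p b) :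
    2 ≤ S.countP p :=
  two_le_countP p ha ((Multiset.mem_erase_of_ne (Ne.symm hne)).2 hb) hpa hpb

lemma exists_two_of_countP (p : MSC → Prop) [DecidablePred p] {S : Multiset MSC}
    (h : 2 ≤ S.countP p) :
    ∃ a b, a ∈ S ∧ b ∈ S.erase a ∧ p a ∧ p b := by
  have h1 : 0 < S.countP p := by omega
  obtain ⟨a, haS, hpa⟩ := Multiset.countP_pos.1 h1
  have heq : S.countP p = (S.erase a).countP p + (if p a then 1 else 0) := by
    conv_lhs => rw [← Multiset.cons_erase haS]
    rw [Multiset.countP_cons]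
  have h2 : 0 < (S.erase a).countP p := by simp [hpa] at heq; omega
  obtain ⟨b, hbS, hpb⟩ := Multiset.countP_pos.1 h2
  exact ⟨a, b, haS, hbS, hpa, hpb⟩

lemma sndIs_number (V x : ℤ) : sndIs V (.number x) = decide (x = V) := rfl
lemma sndIs_merge (V : ℤ) (n : ℕ) (a : ℤ) : sndIs V (.merge n a) = decide (a = V) := rfl
lemma sndIs_arrow (V a b : ℤ) : sndIs V (.arrow a b) = decide (b = V) := rfl
lemma mergeFst_number (M : ℕ) (x : ℤ) : mergeFst M (.number x) = false := rfl
lemma mergeFst_merge (M n : ℕ) (a : ℤ) : mergeFst M (.merge n a) = decide (n = M) := rfl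
lemma mergeFst_arrow (M : ℕ) (a b : ℤ) : mergeFst M (.arrow a b) = false := rfl
lemma arrowFst_number (V x : ℤ) : arrowFst V (.number x) = false := rfl
lemma arrowFst_merge (V : ℤ) (n : ℕ) (a : ℤ) : arrowFst V (.merge n a) = false := rfl
lemma arrowFst_arrow (V a b : ℤ) : arrowFst V (.arrow a b) = decide (a = V) := rfl

/-- The main invariant. -/
def Inv (S : Multiset MSC) : Prop :=
  (∀ a b : ℤ, MSC.arrow a b ∈ S → a < b) ∧
  (∀ V : ℤ, S.countP (fun c => sndIs V c = true) ≤ 1) ∧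
  (∀ N : ℕ, S.countP (fun c => mergeFst N c = true) ≤ 2) ∧
  (∀ N₁ N₂ : ℕ, 2 ≤ S.countP (fun c => mergeFst N₁ c = true) →
      2 ≤ S.countP (fun c => mergeFst N₂ c = true) → N₁ = N₂) ∧
  (∀ V : ℤ, S.countP (fun c => arrowFst V c = true) ≤ 2) ∧
  (∀ V₁ V₂ : ℤ, 2 ≤ S.countP (fun c => arrowFst V₁ c = true) →
      2 ≤ S.countP (fun c => arrowFst V₂ c = true) → V₁ = V₂)

lemma arrowFst_le_one {S : Multiset MSC}
    (h1 : ∀ V : ℤ, S.countP (fun c => sndIs V c = true) ≤ 1)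
    (hno : ¬ ms1App S) (V : ℤ) :
    S.countP (fun c => arrowFst V c = true) ≤ 1 := by
  by_contra h
  push_neg at h
  have h2 : 2 ≤ S.countP (fun c => arrowFst V c = true) := by omega
  obtain ⟨a, b, haS, hbS, hpa, hpb⟩ :=
    exists_two_of_countP (fun c => arrowFst V c = true) h2
  rcases a with x | ⟨n, x⟩ | ⟨x, c⟩ <;>
    simp only [arrowFst_number, arrowFst_merge, arrowFst_arrow, Bool.false_eq_true,
      decide_eq_true_eq] at hpa
  rcases b with y | ⟨m, y⟩ | ⟨y, d⟩ <;>
    simp only [arrowFst_number, arrowFst_merge, arrowFst_arrow, Bool.false_eq_true,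
      decide_eq_true_eq] at hpb
  rw [hpa] at haS hbS
  rw [hpb] at hbS
  by_cases hcd : c = d
  · subst hcd
    have : 2 ≤ S.countP (fun e => sndIs c e = true) :=
      two_le_countP _ haS hbS (by simp [sndIs_arrow]) (by simp [sndIs_arrow])
    have := h1 c
    omega
  · rcases lt_or_gt_of_ne hcd with hlt | hlt
    · exact hno ⟨V, c, d, hlt, haS, Multiset.mem_of_mem_erase hbS⟩
    · exact hno ⟨V, d, c, hlt, Multiset.mem_of_mem_erase hbS, haS⟩

lemma mergeFst_le_one {S : Multiset MSC}
    (h1 : ∀ V : ℤ, S.countP (fun c => sndIs V c = true) ≤ 1)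
    (hno : ¬ ms2App S) (N : ℕ) :
    S.countP (fun c => mergeFst N c = true) ≤ 1 := by
  by_contra h
  push_neg at h
  have h2 : 2 ≤ S.countP (fun c => mergeFst N c = true) := by omega
  obtain ⟨a, b, haS, hbS, hpa, hpb⟩ :=
    exists_two_of_countP (fun c => mergeFst N c = true) h2
  rcases a with x | ⟨n, c⟩ | ⟨x, c⟩ <;>
    simp only [mergeFst_number, mergeFst_merge, mergeFst_arrow, Bool.false_eq_true,
      decide_eq_true_eq] at hpa
  rcases b with y | ⟨m, d⟩ | ⟨y, d⟩ <;>
    simp only [mergeFst_number, mergeFst_merge, mergeFst_arrow, Bool.false_eq_true,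
      decide_eq_true_eq] at hpb
  rw [hpa] at haS hbS
  rw [hpb] at hbS
  by_cases hcd : c = d
  · subst hcd
    have : 2 ≤ S.countP (fun e => sndIs c e = true) :=
      two_le_countP _ haS hbS (by simp [sndIs_merge]) (by simp [sndIs_merge])
    have := h1 c
    omega
  · rcases lt_or_gt_of_ne hcd with hlt | hlt
    · exact hno ⟨N, c, d, hlt, haS, Multiset.mem_of_mem_erase hbS⟩
    · exact hno ⟨N, d, c, hlt, Multiset.mem_of_mem_erase hbS, haS⟩

lemma inv_step {S S' : Multiset MSC} {lab : Lab} (hS : Inv S) (h : Step S lab S') :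
    Inv S' := by
  obtain ⟨h0, h1, h2, h3, h4, h5⟩ := hS
  cases h with
  | ms1 X A B hAB hXA hXB =>
    have hXltA : X < A := h0 X A hXA
    have hXA' : X ≠ A := ne_of_lt hXltA
    have haX : 2 ≤ S.countP (fun c => arrowFst X c = true) :=
      two_le_countP' _ hXA hXB (by simp [ne_of_lt hAB])
        (by simp [arrowFst_arrow]) (by simp [arrowFst_arrow])
    have haA : S.countP (fun c => arrowFst A c = true) ≤ 1 := by
      by_contra hc
      push_neg at hc
      exact hXA' (h5 X A haX (by omega))
    refine ⟨?_, ?_, ?_, ?_, ?_, ?_⟩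
    · intro a b hm
      rcases Multiset.mem_cons.1 hm with he | hm'
      · injection he with e1 e2; subst e1; subst e2; exact hAB
      · exact h0 a b (Multiset.mem_of_mem_erase hm')
    · intro V
      have e := countP_replace (fun c => sndIs V c = true) S (.arrow A B) (.arrow X B) hXB
      simp only [sndIs_arrow, decide_eq_true_eq] at e
      have := h1 V
      omega
    · intro M
      have e := countP_replace (fun c => mergeFst M c = true) S (.arrow A B) (.arrow X B) hXB
      simp only [mergeFst_arrow, Bool.false_eq_true, if_false] at e
      have := h2 M
      omega
    · intro M₁ M₂ hM₁ hM₂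
      have e1 := countP_replace (fun c => mergeFst M₁ c = true) S (.arrow A B) (.arrow X B) hXB
      have e2 := countP_replace (fun c => mergeFst M₂ c = true) S (.arrow A B) (.arrow X B) hXB
      simp only [mergeFst_arrow, Bool.false_eq_true, if_false] at e1 e2
      exact h3 M₁ M₂ (by omega) (by omega)
    · intro V
      have e := countP_replace (fun c => arrowFst V c = true) S (.arrow A B) (.arrow X B) hXB
      simp only [arrowFst_arrow, decide_eq_true_eq] at e
      have h4V := h4 V
      by_cases hA : A = V
      · subst hA
        by_cases hX : X = A
        · exact absurd hX hXA'
        · rw [if_neg hX, if_pos rfl] at e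
          omega
      · by_cases hX : X = V
        · subst hX
          rw [if_pos rfl, if_neg hA] at e
          have := h4 X
          omega
        · rw [if_neg hX, if_neg hA] at e
          omega
    · have key : ∀ V : ℤ,
          2 ≤ (MSC.arrow A B ::ₘ S.erase (MSC.arrow X B)).countP
              (fun c => arrowFst V c = true) → V = A := by
        intro V hV
        have e := countP_replace (fun c => arrowFst V c = true) S (.arrow A B) (.arrow X B) hXB
        simp only [arrowFst_arrow, decide_eq_true_eq] at e
        by_contra hVA
        have hAV : ¬ A = V := fun hh => hVA hh.symm
        by_cases hX : X = V
        · subst hX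
          rw [if_pos rfl, if_neg hAV] at e
          have := h4 X
          omega
        · rw [if_neg hX, if_neg hAV] at e
          exact hX (h5 X V haX (by omega))
      intro V₁ V₂ hV₁ hV₂
      rw [key V₁ hV₁, key V₂ hV₂]
  | ms2 N A B hAB hmA hmB hno =>
    have hABne : A ≠ B := ne_of_lt hAB
    have hmB' : MSC.merge N B ∈ S.erase (MSC.merge N A) :=
      (Multiset.mem_erase_of_ne (by simp [Ne.symm hABne])).2 hmB
    have harr := arrowFst_le_one h1 hno
    have hmN : 2 ≤ S.countP (fun c => mergeFst N c = true) :=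
      two_le_countP _ hmA hmB' (by simp [mergeFst_merge]) (by simp [mergeFst_merge])
    have hm2N : S.countP (fun c => mergeFst (2 * N + 1) c = true) ≤ 1 := by
      by_contra hc
      push_neg at hc
      have := h3 N (2 * N + 1) hmN (by omega)
      omega
    refine ⟨?_, ?_, ?_, ?_, ?_, ?_⟩
    · intro a b hm
      rcases Multiset.mem_cons.1 hm with he | hm'
      · exact absurd he (by simp)
      · rcases Multiset.mem_cons.1 hm' with he | hm''
        · injection he with e1 e2; subst e1; subst e2; exact hAB
        · exact h0 a b (Multiset.mem_of_mem_erase (Multiset.mem_of_mem_erase hm''))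
    · intro V
      have e := countP_replace2 (fun c => sndIs V c = true) S
        (.merge (2 * N + 1) A) (.arrow A B) (.merge N A) (.merge N B) hmA hmB'
      simp only [sndIs_merge, sndIs_arrow, decide_eq_true_eq] at e
      have := h1 V
      omega
    · intro M
      have e := countP_replace2 (fun c => mergeFst M c = true) S
        (.merge (2 * N + 1) A) (.arrow A B) (.merge N A) (.merge N B) hmA hmB'
      simp only [mergeFst_merge, mergeFst_arrow, Bool.false_eq_true, if_false,
        decide_eq_true_eq] at e
      have h2M := h2 M
      by_cases hM : N = M
      · subst hM
        rw [if_pos rfl, if_neg (by omega : ¬ (2 * N + 1 = N))] at e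
        omega
      · by_cases hM2 : 2 * N + 1 = M
        · subst hM2
          rw [if_neg hM, if_pos rfl] at e
          omega
        · rw [if_neg hM, if_neg hM2] at e
          omega
    · have key : ∀ M : ℕ,
          2 ≤ (MSC.merge (2 * N + 1) A ::ₘ MSC.arrow A B ::ₘ
              ((S.erase (MSC.merge N A)).erase (MSC.merge N B))).countP
              (fun c => mergeFst M c = true) → M = 2 * N + 1 := by
        intro M hM
        have e := countP_replace2 (fun c => mergeFst M c = true) S
          (.merge (2 * N + 1) A) (.arrow A B) (.merge N A) (.merge N B) hmA hmB'
        simp only [mergeFst_merge, mergeFst_arrow, Bool.false_eq_true, if_false,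
          decide_eq_true_eq] at e
        by_contra hM2
        have hM2' : ¬ (2 * N + 1 = M) := fun hh => hM2 hh.symm
        by_cases hMN : N = M
        · subst hMN
          have := h2 N
          rw [if_pos rfl, if_neg hM2'] at e
          omega
        · rw [if_neg hMN, if_neg hM2'] at e
          exact hMN (h3 N M hmN (by omega))
      intro M₁ M₂ hM₁ hM₂
      rw [key M₁ hM₁, key M₂ hM₂]
    · intro V
      have e := countP_replace2 (fun c => arrowFst V c = true) S
        (.merge (2 * N + 1) A) (.arrow A B) (.merge N A) (.merge N B) hmA hmB'
      simp only [arrowFst_merge, arrowFst_arrow, Bool.false_eq_true, if_false,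
        decide_eq_true_eq] at e
      have := harr V
      by_cases hVA : A = V
      · rw [if_pos hVA] at e
        omega
      · rw [if_neg hVA] at e
        omega
    · have key : ∀ V : ℤ,
          2 ≤ (MSC.merge (2 * N + 1) A ::ₘ MSC.arrow A B ::ₘ
              ((S.erase (MSC.merge N A)).erase (MSC.merge N B))).countP
              (fun c => arrowFst V c = true) → V = A := by
        intro V hV
        have e := countP_replace2 (fun c => arrowFst V c = true) S
          (.merge (2 * N + 1) A) (.arrow A B) (.merge N A) (.merge N B) hmA hmB'
        simp only [arrowFst_merge, arrowFst_arrow, Bool.false_eq_true, if_false,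
          decide_eq_true_eq] at e
        by_contra hVA
        have hAV : ¬ A = V := fun hh => hVA hh.symm
        rw [if_neg hAV] at e
        have := harr V
        omega
      intro V₁ V₂ hV₁ hV₂
      rw [key V₁ hV₁, key V₂ hV₂]
  | ms3 X hnX hno1 hno2 =>
    have hm1 := mergeFst_le_one h1 hno2
    refine ⟨?_, ?_, ?_, ?_, ?_, ?_⟩
    · intro a b hm
      rcases Multiset.mem_cons.1 hm with he | hm'
      · exact absurd he (by simp)
      · exact h0 a b (Multiset.mem_of_mem_erase hm')
    · intro V
      have e := countP_replace (fun c => sndIs V c = true) S (.merge 0 X) (.number X) hnX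
      simp only [sndIs_number, sndIs_merge, decide_eq_true_eq] at e
      have := h1 V
      omega
    · intro M
      have e := countP_replace (fun c => mergeFst M c = true) S (.merge 0 X) (.number X) hnX
      simp only [mergeFst_number, mergeFst_merge, Bool.false_eq_true, if_false,
        decide_eq_true_eq] at e
      have := hm1 M
      by_cases hM : (0 : ℕ) = M
      · rw [if_pos hM] at e
        omega
      · rw [if_neg hM] at e
        omega
    · have key : ∀ M : ℕ,
          2 ≤ (MSC.merge 0 X ::ₘ S.erase (MSC.number X)).countP
              (fun c => mergeFst M c = true) → M = 0 := by
        intro M hM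
        have e := countP_replace (fun c => mergeFst M c = true) S (.merge 0 X) (.number X) hnX
        simp only [mergeFst_number, mergeFst_merge, Bool.false_eq_true, if_false,
          decide_eq_true_eq] at e
        by_contra hM0
        have hM0' : ¬ ((0 : ℕ) = M) := fun hh => hM0 hh.symm
        rw [if_neg hM0'] at e
        have := hm1 M
        omega
      intro M₁ M₂ hM₁ hM₂
      rw [key M₁ hM₁, key M₂ hM₂]
    · intro V
      have e := countP_replace (fun c => arrowFst V c = true) S (.merge 0 X) (.number X) hnX
      simp only [arrowFst_number, arrowFst_merge, Bool.false_eq_true, if_false] at e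
      have := h4 V
      omega
    · intro V₁ V₂ hV₁ hV₂
      have e1 := countP_replace (fun c => arrowFst V₁ c = true) S (.merge 0 X) (.number X) hnX
      have e2 := countP_replace (fun c => arrowFst V₂ c = true) S (.merge 0 X) (.number X) hnX
      simp only [arrowFst_number, arrowFst_merge, Bool.false_eq_true, if_false] at e1 e2
      exact h5 V₁ V₂ (by omega) (by omega)

lemma inv_init (l : List ℤ) (hnodup : l.Nodup) : Inv (InitState l) := by
  have hcount : ∀ (p : MSC → Prop) [DecidablePred p],
      (InitState l).countP p = l.countP (fun x => decide (p (MSC.number x))) := by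
    intro p _
    simp only [InitState, Multiset.coe_countP, List.countP_map]
    rfl
  refine ⟨?_, ?_, ?_, ?_, ?_, ?_⟩
  · intro a b hm
    simp [InitState] at hm
  · intro V
    rw [hcount]
    have heq : (fun x : ℤ => decide ((fun c => sndIs V c = true) (MSC.number x)))
        = fun x => x == V := by
      funext x
      show decide (sndIs V (MSC.number x) = true) = (x == V)
      rw [sndIs_number]
      simp only [decide_eq_true_eq]
      rfl
    rw [heq]
    exact List.nodup_iff_count_le_one.1 hnodup V
  · intro M
    rw [hcount]
    simp [mergeFst_number]
  · intro M₁ M₂ hM₁ hM₂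
    rw [hcount] at hM₁
    simp [mergeFst_number] at hM₁
  · intro V
    rw [hcount]
    simp [arrowFst_number]
  · intro V₁ V₂ hV₁ hV₂
    rw [hcount] at hV₁
    simp [arrowFst_number] at hV₁

lemma inv_reach {l : List ℤ} (hnodup : l.Nodup) {S : Multiset MSC} (hS : Reach l S) :
    Inv S := by
  induction hS with
  | refl => exact inv_init l hnodup
  | tail _ hstep ih => exact inv_step ih hstep.choose_spec

end MergeSort

open MergeSort in
/-- In the merge sort CHR^rp program executed under ω_p from an initial goal of `n`
distinct `number/1` constraints, in every reachable state there are, for each value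
`V`, at most two stored `merge` constraints with first argument `V` and at most two
stored `arrow` constraints with first argument `V`. -/
theorem merge_and_arrow_first_argument_at_most_twice
    (n : ℕ) (l : List ℤ) (hlen : l.length = n) (hnodup : l.Nodup)
    (S : Multiset MSC) (hS : Reach l S) :
    (∀ N : ℕ, S.countP (fun c => mergeFst N c = true) ≤ 2) ∧
    (∀ V : ℤ, S.countP (fun c => arrowFst V c = true) ≤ 2) := by
  obtain ⟨_, _, h2, _, h4, _⟩ := inv_reach hnodup hS
  exact ⟨h2, h4⟩
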